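/- Let β be a positive integer, let x_1,…,x_β be i.i.d. random variables with the arcsine distribution, and let d be uniform on {−1,+1}, independent of the x_k. Define the DCSK chips s_k = x_k for 1 ≤ k ≤ β and s_{β+k} = d·x_k for 1 ≤ k ≤ β, so that Σ_{k=1}^{2β} s_k = (1+d)·Σ_{k=1}^{β} x_k. Then the essential supremum of (Σ_{k=1}^{2β} s_k)² equals 4β², its expectation equals β, and hence the peak-to-average-power ratio (essential supremum divided by expectation) of the correlator output equals 4β. -/

import Mathlib

open MeasureTheory ProbabilityTheory
open scoped ENNReal

/-- The arcsine (Chebyshev invariant) distribution on (−1,1), with density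
1/(π√(1−x²)) for |x| < 1 and 0 otherwise. -/
noncomputable def arcsineMeasure : Measure ℝ :=
  volume.withDensity fun x =>
    ENNReal.ofReal (if |x| < 1 then 1 / (Real.pi * Real.sqrt (1 - x ^ 2)) else 0)

/-- The uniform distribution on {−1, +1}. -/
noncomputable def rademacherMeasure : Measure ℝ :=
  (1 / 2 : ℝ≥0∞) • Measure.dirac (-1) + (1 / 2 : ℝ≥0∞) • Measure.dirac 1

open Real Set

section Aux

lemma arc_h_nonneg (t : ℝ) : 0 ≤ (if |t| < 1 then 1 / (Real.pi * Real.sqrt (1 - t ^ 2)) else 0) := by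
  split <;> positivity

lemma arc_h_meas : Measurable (fun t : ℝ => if |t| < 1 then 1 / (Real.pi * Real.sqrt (1 - t ^ 2)) else 0) := by
  apply Measurable.ite
  · exact measurableSet_lt (measurable_abs) measurable_const
  · exact (measurable_const.mul ((measurable_const.sub (measurable_id.pow_const 2)).sqrt)).const_div 1
  · exact measurable_const

lemma sin_image_Ioo : Real.sin '' Ioo (-(π/2)) (π/2) = Ioo (-1 : ℝ) 1 := by
  ext y
  constructor
  · rintro ⟨θ, hθ, rfl⟩
    constructor
    · have := sin_lt_sin_of_lt_of_le_pi_div_two (le_refl (-(π/2))) hθ.2.le hθ.1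
      simpa using this
    · have := sin_lt_sin_of_lt_of_le_pi_div_two hθ.1.le le_rfl hθ.2
      simpa using this
  · intro hy
    exact ⟨arcsin y, ⟨neg_pi_div_two_lt_arcsin.2 hy.1, arcsin_lt_pi_div_two.2 hy.2⟩,
      sin_arcsin hy.1.le hy.2.le⟩

lemma arcsine_integral (g : ℝ → ℝ) :
    ∫ t, g t ∂arcsineMeasure = (∫ θ in Ioo (-(π/2)) (π/2), g (Real.sin θ)) / π := by
  set h : ℝ → ℝ := fun t => if |t| < 1 then 1 / (Real.pi * Real.sqrt (1 - t ^ 2)) else 0 with hh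
  have h1 : arcsineMeasure = volume.withDensity (fun t => ((h t).toNNReal : ℝ≥0∞)) := rfl
  rw [h1, integral_withDensity_eq_integral_smul (f := fun t => (h t).toNNReal)
    (measurable_real_toNNReal.comp arc_h_meas) g]
  have h2 : (fun t => (h t).toNNReal • g t) = (Ioo (-1:ℝ) 1).indicator (fun t => h t * g t) := by
    funext t
    by_cases ht : |t| < 1
    · rw [indicator_of_mem (Set.mem_Ioo.mpr (abs_lt.mp ht))]
      rw [NNReal.smul_def, Real.coe_toNNReal _ (arc_h_nonneg t), smul_eq_mul]
    · rw [indicator_of_notMem (by simpa [abs_lt] using ht)]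
      simp [hh, NNReal.smul_def, if_neg ht]
  rw [h2, integral_indicator measurableSet_Ioo, ← sin_image_Ioo,
    integral_image_eq_integral_abs_deriv_smul measurableSet_Ioo
      (fun θ _ => (Real.hasDerivAt_sin θ).hasDerivWithinAt)
      (Real.injOn_sin.mono (Ioo_subset_Icc_self)) _]
  have h3 : ∀ θ ∈ Ioo (-(π/2)) (π/2), |Real.cos θ| • (h (Real.sin θ) * g (Real.sin θ)) = (1/π) * g (Real.sin θ) := by
    intro θ hθ
    have hc : 0 < Real.cos θ := Real.cos_pos_of_mem_Ioo hθ
    have hs : |Real.sin θ| < 1 := by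
      rw [abs_lt]
      constructor
      · have := sin_lt_sin_of_lt_of_le_pi_div_two le_rfl hθ.2.le hθ.1; simpa using this
      · have := sin_lt_sin_of_lt_of_le_pi_div_two hθ.1.le le_rfl hθ.2; simpa using this
    have hsq : Real.sqrt (1 - Real.sin θ ^ 2) = Real.cos θ := by
      rw [← Real.cos_sq']
      exact Real.sqrt_sq hc.le
    simp only [hh, if_pos hs, hsq, smul_eq_mul, abs_of_pos hc]
    field_simp
  rw [setIntegral_congr_fun measurableSet_Ioo h3, integral_const_mul, one_div, inv_mul_eq_div]

lemma arcsine_m1 : ∫ t, t ∂arcsineMeasure = 0 := by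
  rw [arcsine_integral (fun t => t), ← integral_Ioc_eq_integral_Ioo,
    ← intervalIntegral.integral_of_le (by linarith [pi_pos] : -(π/2) ≤ π/2)]
  simp [integral_sin]

lemma arcsine_m2 : ∫ t, t^2 ∂arcsineMeasure = 1/2 := by
  rw [arcsine_integral (fun t => t^2), ← integral_Ioc_eq_integral_Ioo,
    ← intervalIntegral.integral_of_le (by linarith [pi_pos] : -(π/2) ≤ π/2)]
  rw [integral_sin_sq]
  simp
  field_simp

lemma arcsine_abs_ge_zero : arcsineMeasure {t : ℝ | 1 ≤ |t|} = 0 := by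
  have hs : MeasurableSet {t : ℝ | 1 ≤ |t|} := measurableSet_le measurable_const measurable_abs
  rw [arcsineMeasure, withDensity_apply _ hs]
  rw [setLIntegral_congr_fun hs (fun t ht => ?_), lintegral_zero]
  have : ¬ (|t| < 1) := not_lt.mpr ht
  simp [this]

lemma arcsine_Ioi_pos {r : ℝ} (hr : r < 1) : 0 < arcsineMeasure (Ioi r) := by
  set r' := max r 0 with hr'
  have hr'1 : r' < 1 := by simp [hr', hr]
  have hsub : Ioo r' 1 ⊆ Ioi r := fun t ht => lt_of_le_of_lt (le_max_left r 0) ht.1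
  refine lt_of_lt_of_le ?_ (measure_mono hsub)
  rw [arcsineMeasure, withDensity_apply _ measurableSet_Ioo]
  have hbound : ∀ᵐ t ∂(volume.restrict (Ioo r' 1)),
      ENNReal.ofReal (1/π) ≤ ENNReal.ofReal (if |t| < 1 then 1 / (Real.pi * Real.sqrt (1 - t ^ 2)) else 0) := by
    rw [ae_restrict_iff' measurableSet_Ioo]
    refine ae_of_all _ fun t ht => ?_
    have h0 : 0 ≤ t := le_trans (le_max_right r 0) ht.1.le
    have h1 : |t| < 1 := by rw [abs_of_nonneg h0]; exact ht.2
    rw [if_pos h1]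
    apply ENNReal.ofReal_le_ofReal
    have hsp : 0 < Real.sqrt (1 - t ^ 2) := Real.sqrt_pos.mpr (by nlinarith [ht.2])
    rw [div_le_div_iff₀ Real.pi_pos (by positivity)]
    have hsle : Real.sqrt (1 - t ^ 2) ≤ 1 := Real.sqrt_le_one.mpr (by nlinarith)
    nlinarith [Real.pi_pos]
  calc (0:ℝ≥0∞) < ENNReal.ofReal (1/π) * volume (Ioo r' 1) := by
        rw [Real.volume_Ioo]
        have := Real.pi_pos
        apply ENNReal.mul_pos
        · simp [ENNReal.ofReal_eq_zero, not_le]; positivity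
        · simp [ENNReal.ofReal_eq_zero, not_le]; linarith
    _ = ∫⁻ _ in Ioo r' 1, ENNReal.ofReal (1/π) := by rw [setLIntegral_const]
    _ ≤ _ := lintegral_mono_ae hbound

lemma rademacher_one : rademacherMeasure {1} = 1/2 := by
  rw [rademacherMeasure]
  rw [Measure.add_apply, Measure.smul_apply, Measure.smul_apply,
    Measure.dirac_apply' _ (measurableSet_singleton 1), Measure.dirac_apply' _ (measurableSet_singleton 1)]
  norm_num

lemma rademacher_compl : rademacherMeasure ({-1, 1} : Set ℝ)ᶜ = 0 := by
  have hs : MeasurableSet (({-1, 1} : Set ℝ)ᶜ) := (by measurability)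
  rw [rademacherMeasure, Measure.add_apply, Measure.smul_apply, Measure.smul_apply,
    Measure.dirac_apply' _ hs, Measure.dirac_apply' _ hs]
  simp

lemma rademacher_integral : ∫ t, (1 + t)^2 ∂rademacherMeasure = 2 := by
  rw [rademacherMeasure, integral_add_measure, integral_smul_measure, integral_smul_measure,
    integral_dirac, integral_dirac]
  · norm_num
  · apply Integrable.smul_measure
    · exact (integrable_const _).congr (ae_eq_dirac (fun t : ℝ => (1+t)^2)).symm
    · norm_num
  · apply Integrable.smul_measure
    · exact (integrable_const _).congr (ae_eq_dirac (fun t : ℝ => (1+t)^2)).symm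
    · norm_num

end Aux

/-- for the DCSK chips s_k, the correlator output Σ_{k=1}^{2β} s_k
(= (1+d)·Σ_{k=1}^{β} x_k) has essential supremum of its square equal to 4β²,
expectation of its square equal to β, and hence PAPR equal to 4β. -/
theorem stmt_1 {Ω : Type*} [MeasurableSpace Ω] (P : Measure Ω) [IsProbabilityMeasure P]
    (β : ℕ) (hβ : 0 < β) (x : Fin β → Ω → ℝ) (d : Ω → ℝ)
    (hxmeas : ∀ k, Measurable (x k)) (hdmeas : Measurable d)
    (hxlaw : ∀ k, Measure.map (x k) P = arcsineMeasure)
    (hdlaw : Measure.map d P = rademacherMeasure)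
    (hindep : iIndepFun
      (fun i : Option (Fin β) => i.elim d x) P)
    (s : Fin (β + β) → Ω → ℝ)
    (hs : s = Fin.addCases (fun k => x k) (fun k ω => d ω * x k ω))
    (hsum : ∀ ω, ∑ k, s k ω = (1 + d ω) * ∑ k, x k ω) :
    essSup (fun ω => (∑ k, s k ω) ^ 2) P = 4 * (β : ℝ) ^ 2 ∧
    (∫ ω, (∑ k, s k ω) ^ 2 ∂P) = (β : ℝ) ∧
    essSup (fun ω => (∑ k, s k ω) ^ 2) P / (∫ ω, (∑ k, s k ω) ^ 2 ∂P) = 4 * (β : ℝ) := by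
  classical
  have hβR : (0:ℝ) < β := Nat.cast_pos.mpr hβ
  set S : Ω → ℝ := ∑ k : Fin β, x k with hSdef
  have hSapp : ∀ ω, S ω = ∑ k, x k ω := fun ω => Finset.sum_apply _ _ _
  have hSmeas : Measurable S := by
    have h := Finset.measurable_sum (Finset.univ) (fun k (_ : k ∈ Finset.univ) => hxmeas k)
    convert h using 1
    exact funext hSapp
  have hfun : ∀ ω, (∑ k, s k ω)^2 = S ω ^ 2 * (1 + d ω)^2 := by
    intro ω; rw [hsum ω, hSapp]; ring
  -- a.e. bounds
  have hax : ∀ᵐ ω ∂P, ∀ k, |x k ω| ≤ 1 := by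
    rw [ae_all_iff]
    intro k
    have h0 : P ((x k) ⁻¹' {t : ℝ | 1 ≤ |t|}) = 0 := by
      rw [← Measure.map_apply (hxmeas k) (measurableSet_le measurable_const measurable_abs),
        hxlaw k, arcsine_abs_ge_zero]
    rw [ae_iff]
    refine measure_mono_null (fun ω hω => ?_) h0
    show (1:ℝ) ≤ |x k ω|
    exact le_of_lt (not_le.mp hω)
  have had : ∀ᵐ ω ∂P, d ω = -1 ∨ d ω = 1 := by
    have h0 : P (d ⁻¹' (({-1, 1} : Set ℝ)ᶜ)) = 0 := by
      rw [← Measure.map_apply hdmeas (by measurability), hdlaw, rademacher_compl]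
    rw [ae_iff]
    refine measure_mono_null (fun ω hω => ?_) h0
    simpa using hω
  -- the integrals / moments
  have hmem : ∀ k, MemLp (x k) 2 P := by
    intro k
    refine MemLp.of_bound (hxmeas k).aestronglyMeasurable 1 ?_
    filter_upwards [hax] with ω hω using by simpa [Real.norm_eq_abs] using hω k
  have hm1 : ∀ k, ∫ ω, x k ω ∂P = 0 := by
    intro k
    have h := integral_map (μ := P) (φ := x k) (hxmeas k).aemeasurable
      (f := fun t : ℝ => t) aestronglyMeasurable_id
    rw [hxlaw k] at h
    rw [← h]
    exact arcsine_m1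
  have hm2 : ∀ k, ∫ ω, (x k ω)^2 ∂P = 1/2 := by
    intro k
    have h := integral_map (μ := P) (φ := x k) (hxmeas k).aemeasurable
      (f := fun t : ℝ => t ^ 2) (measurable_id.pow_const 2).aestronglyMeasurable
    rw [hxlaw k] at h
    rw [← h]
    exact arcsine_m2
  have hvar : ∀ k, variance (x k) P = 1/2 := by
    intro k
    rw [variance_eq_sub (hmem k)]
    simp only [Pi.pow_apply]
    rw [hm2 k, hm1 k]
    norm_num
  have hfmeas : ∀ i : Option (Fin β), Measurable ((fun i : Option (Fin β) => i.elim d x) i) := by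
    rintro (_|k)
    · exact hdmeas
    · exact hxmeas k
  have hpair : Set.Pairwise ↑(Finset.univ : Finset (Fin β))
      (fun i j => IndepFun (x i) (x j) P) := by
    intro i _ j _ hij
    exact hindep.indepFun (by simpa using hij : (some i : Option (Fin β)) ≠ some j)
  have hVarS : variance S P = β / 2 := by
    rw [hSdef, IndepFun.variance_sum (fun k _ => hmem k) hpair]
    simp [hvar]
    ring
  have hSmem : MemLp S 2 P := by
    rw [hSdef]
    exact memLp_finsetSum' _ (fun k _ => hmem k)
  have hES : ∫ ω, S ω ∂P = 0 := by
    have : ∫ ω, S ω ∂P = ∑ k, ∫ ω, x k ω ∂P := by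
      simp only [hSapp]
      exact integral_finset_sum _ fun k _ => (hmem k).integrable one_le_two
    rw [this]
    simp [hm1]
  have hES2 : ∫ ω, S ω ^ 2 ∂P = β / 2 := by
    have h := variance_eq_sub hSmem
    simp only [Pi.pow_apply] at h
    rw [hES] at h
    rw [← hVarS, h]
    ring
  -- independence of S² and (1+d)²
  have hindS : IndepFun S d P := by
    have hnone : (none : Option (Fin β)) ∉ Finset.univ.image (some : Fin β → Option (Fin β)) := by
      simp
    have h := hindep.indepFun_finsetSum_of_notMem hfmeas hnone
    have heq : (∑ j ∈ Finset.univ.image (some : Fin β → Option (Fin β)),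
        (fun i : Option (Fin β) => i.elim d x) j) = S := by
      rw [Finset.sum_image (fun a _ b _ h => Option.some_injective _ h)]
      rfl
    rw [heq] at h
    exact h
  have hindSq : IndepFun (fun ω => S ω ^ 2) (fun ω => (1 + d ω)^2) P := by
    exact hindS.comp (measurable_id.pow_const 2)
      ((measurable_const.add measurable_id).pow_const 2)
  have hED : ∫ ω, (1 + d ω)^2 ∂P = 2 := by
    have h := integral_map (μ := P) (φ := d) hdmeas.aemeasurable
      (f := fun t : ℝ => (1 + t) ^ 2)
      ((measurable_const.add measurable_id).pow_const 2).aestronglyMeasurable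
    rw [hdlaw] at h
    rw [← h]
    exact rademacher_integral
  -- the expectation
  have hExp : (∫ ω, (∑ k, s k ω) ^ 2 ∂P) = (β : ℝ) := by
    calc (∫ ω, (∑ k, s k ω) ^ 2 ∂P) = ∫ ω, S ω ^ 2 * (1 + d ω)^2 ∂P := by
          exact integral_congr_ae (ae_of_all _ fun ω => hfun ω)
      _ = (∫ ω, S ω ^ 2 ∂P) * ∫ ω, (1 + d ω)^2 ∂P := by
          exact hindSq.integral_mul_eq_mul_integral (hSmeas.pow_const 2).aestronglyMeasurable
            ((measurable_const.add hdmeas).pow_const 2).aestronglyMeasurable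
      _ = (β : ℝ) := by rw [hES2, hED]; ring
  -- the essential supremum
  have hub : ∀ᵐ ω ∂P, (∑ k, s k ω) ^ 2 ≤ 4 * (β:ℝ)^2 := by
    filter_upwards [hax, had] with ω h1 h2
    have hSb : |S ω| ≤ β := by
      rw [hSapp]
      calc |∑ k, x k ω| ≤ ∑ k, |x k ω| := Finset.abs_sum_le_sum_abs _ _
        _ ≤ ∑ _k : Fin β, (1:ℝ) := Finset.sum_le_sum fun k _ => h1 k
        _ = β := by simp
    have hdb : |1 + d ω| ≤ 2 := by
      rcases h2 with h | h <;> rw [h] <;> norm_num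
    rw [hfun ω]
    calc S ω ^ 2 * (1 + d ω)^2 = (|S ω| * |1 + d ω|)^2 := by
          rw [mul_pow, sq_abs, sq_abs]
      _ ≤ ((β:ℝ) * 2)^2 := by
          apply pow_le_pow_left₀ (by positivity)
          exact mul_le_mul hSb hdb (abs_nonneg _) hβR.le
      _ = 4 * (β:ℝ)^2 := by ring
  have hlb : ∀ a : ℝ, (∀ᵐ ω ∂P, (∑ k, s k ω) ^ 2 ≤ a) → 4 * (β:ℝ)^2 ≤ a := by
    intro a ha
    by_contra hcon
    push_neg at hcon
    -- choose a threshold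
    set c := max a 0 with hc
    have hc4 : c < 4 * (β:ℝ)^2 := by
      rw [hc, max_lt_iff]
      exact ⟨hcon, by positivity⟩
    set t := (c + 4 * (β:ℝ)^2) / 2 with ht
    have htpos : 0 < t := by
      have : (0:ℝ) ≤ c := le_max_right a 0
      rw [ht]; positivity
    have htlt : t < 4 * (β:ℝ)^2 := by rw [ht]; linarith
    have htgt : c < t := by rw [ht]; linarith
    set r := Real.sqrt (t / (4 * (β:ℝ)^2)) with hrdef
    have hr0 : 0 < r := Real.sqrt_pos.mpr (by positivity)
    have hr1 : r < 1 := by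
      rw [hrdef]
      rw [show (1:ℝ) = Real.sqrt 1 by simp]
      apply Real.sqrt_lt_sqrt (by positivity)
      rw [div_lt_one (by positivity)]
      exact htlt
    have hrsq : 4 * (β:ℝ)^2 * r^2 = t := by
      rw [hrdef, Real.sq_sqrt (by positivity)]
      field_simp
    -- the event
    set B : Option (Fin β) → Set Ω := Option.elim' (d ⁻¹' {1}) (fun k => x k ⁻¹' Ioi r) with hB
    have hBmeas : ∀ i, MeasurableSet[(inferInstance : MeasurableSpace ℝ).comap
        ((fun i : Option (Fin β) => i.elim d x) i)] (B i) := by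
      rintro (_|k)
      · exact ⟨{1}, measurableSet_singleton 1, rfl⟩
      · exact ⟨Ioi r, measurableSet_Ioi, rfl⟩
    have hprod := hindep.meas_iInter hBmeas
    have hpos : 0 < P (⋂ i, B i) := by
      rw [hprod]
      rw [CanonicallyOrderedAdd.prod_pos]
      rintro (_|k) _
      · show 0 < P (d ⁻¹' {1})
        rw [← Measure.map_apply hdmeas (measurableSet_singleton 1), hdlaw, rademacher_one]
        norm_num
      · show 0 < P (x k ⁻¹' Ioi r)
        rw [← Measure.map_apply (hxmeas k) measurableSet_Ioi, hxlaw k]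
        exact arcsine_Ioi_pos hr1
    -- on the event the square exceeds a
    have hgt : ∀ ω ∈ ⋂ i, B i, a < (∑ k, s k ω) ^ 2 := by
      intro ω hω
      simp only [Set.mem_iInter] at hω
      have hd1 : d ω = 1 := hω none
      have hxk : ∀ k, r < x k ω := fun k => hω (some k)
      have hSgt : (β:ℝ) * r < S ω := by
        rw [hSapp]
        calc (β:ℝ) * r = ∑ _k : Fin β, r := by
              rw [Finset.sum_const, Finset.card_univ, Fintype.card_fin, nsmul_eq_mul]
          _ < ∑ k, x k ω := Finset.sum_lt_sum_of_nonempty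
              (Finset.univ_nonempty_iff.mpr ⟨⟨0, hβ⟩⟩) fun k _ => hxk k
      have hSpos : 0 < S ω := lt_trans (by positivity) hSgt
      have : t < (∑ k, s k ω)^2 := by
        rw [hfun ω, hd1]
        have h4 : ((β:ℝ) * r)^2 < S ω ^ 2 := by
          apply sq_lt_sq' _ hSgt
          nlinarith
        calc t = 4 * (β:ℝ)^2 * r^2 := hrsq.symm
          _ = ((β:ℝ) * r)^2 * (1 + 1)^2 := by ring
          _ < S ω ^ 2 * (1 + 1)^2 := by nlinarith
      calc a ≤ c := le_max_left a 0
        _ < t := htgt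
        _ < _ := this
    have hzero : P (⋂ i, B i) = 0 := by
      rw [ae_iff] at ha
      refine measure_mono_null (fun ω hω => ?_) ha
      exact not_le.mpr (hgt ω hω)
    rw [hzero] at hpos
    exact lt_irrefl _ hpos
  have hess : essSup (fun ω => (∑ k, s k ω) ^ 2) P = 4 * (β : ℝ) ^ 2 := by
    rw [essSup_eq_sInf]
    have key : ∀ a : ℝ, (P {ω | a < (∑ k, s k ω)^2} = 0) ↔ (∀ᵐ ω ∂P, (∑ k, s k ω)^2 ≤ a) := by
      intro a
      rw [ae_iff]
      simp [not_le]
    have hset : {a : ℝ | P {ω | a < (∑ k, s k ω)^2} = 0} = Ici (4 * (β:ℝ)^2) := by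
      ext a
      rw [Set.mem_setOf_eq, key, Set.mem_Ici]
      constructor
      · intro ha
        exact hlb a ha
      · intro ha
        filter_upwards [hub] with ω hω using le_trans hω ha
    rw [hset, csInf_Ici]
  refine ⟨hess, hExp, ?_⟩
  rw [hess, hExp]
  field_simp
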